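/- Let p be a real polynomial of degree at most N, let x₀, h, H ∈ ℝ, and let m, n ∈ ℕ. Then the m × n real matrix A defined by A(i, j) = p(x₀ + h·i + H·j) for 0 ≤ i < m, 0 ≤ j < n has rank at most N + 1. -/
import Mathlib


/-- A polynomial of degree at most `N` sampled on a two-parameter uniform grid yields a
matrix of rank at most `N + 1` (key linear-algebra fact behind QTT rank bounds for
polynomials sampled on uniform grids). -/
theorem polynomial_grid_matrix_rank (p : Polynomial ℝ) (N : ℕ) (hp : p.natDegree ≤ N)
    (x₀ h H : ℝ) (m n : ℕ) :
    Matrix.rank (Matrix.of fun (i : Fin m) (j : Fin n) =>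
      p.eval (x₀ + h * (i : ℕ) + H * (j : ℕ))) ≤ N + 1 := by
  set B : Matrix (Fin m) (Fin (N + 1)) ℝ :=
    Matrix.of fun i k => (Polynomial.taylor (x₀ + h * (i : ℕ)) p).coeff (k : ℕ)
  set C : Matrix (Fin (N + 1)) (Fin n) ℝ :=
    Matrix.of fun k j => (H * (j : ℕ)) ^ (k : ℕ)
  have key : (Matrix.of fun (i : Fin m) (j : Fin n) =>
      p.eval (x₀ + h * (i : ℕ) + H * (j : ℕ))) = B * C := by
    ext i j
    have h1 : p.eval (x₀ + h * (i : ℕ) + H * (j : ℕ)) =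
        (Polynomial.taylor (x₀ + h * (i : ℕ)) p).eval (H * (j : ℕ)) := by
      rw [Polynomial.taylor_eval]; ring_nf
    have hdeg : (Polynomial.taylor (x₀ + h * (i : ℕ)) p).natDegree < N + 1 := by
      rw [Polynomial.natDegree_taylor]; omega
    rw [Matrix.mul_apply, Matrix.of_apply, h1,
      Polynomial.eval_eq_sum_range' hdeg, Finset.sum_range fun k => _]
    rfl
  rw [key]
  exact le_trans (Matrix.rank_mul_le_right B C)
    (le_trans (Matrix.rank_le_card_height C) (by simp))
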